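/- Let m ≡ 0 (mod 4) and n ≥ 2 be integers, and let k = ⌊n/2⌋. Then the multiplicity of 2k as an eigenvalue of the adjacency matrix of the generalised pancake graph P_m(n) is at least 2. -/

import Mathlib

open Polynomial

/-- An `m`-coloured permutation of `{1, …, n}`: a pair `(χ, ψ)` of a colour
function `χ : [n] → ℤ/mℤ` and a permutation `ψ` of `[n]` (positions and letters
are 0-indexed, so the letter `1` of the paper corresponds to `0 : Fin n`). -/
abbrev ColouredPerm (m n : ℕ) := (Fin n → ZMod m) × Equiv.Perm (Fin n)

/-- The map on positions underlying reversal of the prefix of length `k`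
(for `1 ≤ k ≤ n`; it is the identity outside this range of `k`). -/
def flipFun (n k : ℕ) : Fin n → Fin n := fun t =>
  if h : t.val < k ∧ k ≤ n then ⟨k - 1 - t.val, by omega⟩ else t

theorem flipFun_involutive (n k : ℕ) : Function.Involutive (flipFun n k) := by
  intro t
  unfold flipFun
  by_cases h : t.val < k ∧ k ≤ n
  · rw [dif_pos h, dif_pos (by simp only [Fin.val_mk]; omega)]
    apply Fin.ext
    simp only [Fin.val_mk]
    omega
  · rw [dif_neg h, dif_neg h]

/-- Reversal of the prefix of length `k`, as a permutation of positions. -/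
def flipPerm (n k : ℕ) : Equiv.Perm (Fin n) := (flipFun_involutive n k).toPerm

/-- The prefix reversal `r_k^ε` acting on `m`-coloured permutations: it
reverses the prefix of length `k` and adds `ε` to the colours in that prefix. -/
def prefixRev (m n : ℕ) (k : ℕ) (ε : ZMod m) (σ : ColouredPerm m n) :
    ColouredPerm m n :=
  (fun t => if t.val < k then σ.1 (flipPerm n k t) + ε else σ.1 t,
   σ.2 * flipPerm n k)

/-- Adjacency in the generalised pancake graph: two distinct coloured
permutations are adjacent iff one is obtained from the other by a prefix
reversal `r_k^ε` with `1 ≤ k ≤ n` and `ε ∈ {+1, -1}`. -/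
def pancakeAdj (m n : ℕ) (σ τ : ColouredPerm m n) : Prop :=
  σ ≠ τ ∧ ∃ k, 1 ≤ k ∧ k ≤ n ∧ ∃ ε : ZMod m, (ε = 1 ∨ ε = -1) ∧
    (τ = prefixRev m n k ε σ ∨ σ = prefixRev m n k ε τ)

/-- The generalised pancake graph `𝒫_m(n)`. -/
def pancakeGraph (m n : ℕ) : SimpleGraph (ColouredPerm m n) where
  Adj := pancakeAdj m n
  symm := ⟨by
    rintro a b ⟨hab, k, hk1, hk2, ε, hε, h⟩
    exact ⟨hab.symm, k, hk1, hk2, ε, hε, h.symm⟩⟩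
  loopless := ⟨by rintro a ⟨h, -⟩; exact h rfl⟩

open Classical in
/-- The (real) adjacency matrix of the generalised pancake graph `𝒫_m(n)`. -/
noncomputable def pancakeAdjMatrix (m n : ℕ) :
    Matrix (ColouredPerm m n) (ColouredPerm m n) ℝ :=
  Matrix.of fun σ τ => if pancakeAdj m n σ τ then 1 else 0

/-- The `i`-th largest eigenvalue (`i = 1, 2, …`) of a real matrix `M`,
i.e. the `i`-th largest root of its characteristic polynomial, counted
with multiplicity (junk value `0` if there are fewer than `i` real roots). -/
noncomputable def nthLargestEig {V : Type*} [Fintype V] [DecidableEq V]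
    (M : Matrix V V ℝ) (i : ℕ) : ℝ :=
  ((M.charpoly.roots.sort (· ≤ ·)).reverse).getD (i - 1) 0

/-- The diagonal matrix `D_n = diag(0, 1, …, n-1)`. -/
noncomputable def Dmat (n : ℕ) : Matrix (Fin n) (Fin n) ℝ :=
  Matrix.diagonal fun j => (j.val : ℝ)

/-- The 0/1 matrix `E_n`, whose `(i, j)` entry (1-indexed) is `1` iff
`i + j ≤ n + 1`. -/
noncomputable def Emat (n : ℕ) : Matrix (Fin n) (Fin n) ℝ :=
  Matrix.of fun j j' => if (j.val + 1) + (j'.val + 1) ≤ n + 1 then 1 else 0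

/-- The `mn × mn` block circulant matrix `circ(B_0, …, B_{m-1})` whose
`(r, s)` block is `B_{s - r mod m}`. -/
def blockCirc (m n : ℕ) (B : ZMod m → Matrix (Fin n) (Fin n) ℝ) :
    Matrix (ZMod m × Fin n) (ZMod m × Fin n) ℝ :=
  Matrix.of fun p q => B (q.1 - p.1) p.2 q.2

/-- The part `V_{i,j}` of the vertex set of `𝒫_m(n)`: those coloured
permutations in which the letter `1` (here `0 : Fin n`) occupies position `j`
with colour `i`. -/
def Vpart (m n : ℕ) (i : ZMod m) (j : Fin n) : Set (ColouredPerm m n) :=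
  {σ | σ.2 j = ⟨0, j.pos⟩ ∧ σ.1 j = i}

section PancakeProofAux

open Finset Matrix

noncomputable def pat (r : ℕ) : ℝ := if r % 4 = 0 then 1 else if r % 4 = 2 then -1 else 0

lemma pat_congr {x y : ℕ} (h : x % 4 = y % 4) : pat x = pat y := by
  unfold pat; rw [h]

lemma flipPerm_apply (n k : ℕ) (t : Fin n) : flipPerm n k t = flipFun n k t := rfl

lemma flipPerm_inv (n k : ℕ) : (flipPerm n k)⁻¹ = flipPerm n k := rfl

lemma flipPerm_flipPerm (n k : ℕ) (t : Fin n) : flipPerm n k (flipPerm n k t) = t :=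
  flipFun_involutive n k t

lemma flipPerm_mul_self (n k : ℕ) : flipPerm n k * flipPerm n k = 1 := by
  ext t
  simp [Equiv.Perm.mul_apply, flipPerm_flipPerm]

lemma flipPerm_val_lt (n k : ℕ) {t : Fin n} (h : t.val < k) : (flipPerm n k t).val < k := by
  rw [flipPerm_apply]; unfold flipFun
  split_ifs with h'
  · simp only [Fin.val_mk]; omega
  · exact h

lemma flipPerm_apply_lt (n k : ℕ) {t : Fin n} (h : t.val < k) (hk : k ≤ n) :
    flipPerm n k t = ⟨k - 1 - t.val, by omega⟩ := by
  rw [flipPerm_apply]; unfold flipFun; rw [dif_pos ⟨h, hk⟩]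

lemma flipPerm_apply_ge (n k : ℕ) {t : Fin n} (h : ¬ t.val < k) :
    flipPerm n k t = t := by
  rw [flipPerm_apply]; unfold flipFun; rw [dif_neg (by tauto)]

lemma prefixRev_fst (m n k : ℕ) (ε : ZMod m) (σ : ColouredPerm m n) (t : Fin n) :
    (prefixRev m n k ε σ).1 t = if t.val < k then σ.1 (flipPerm n k t) + ε else σ.1 t := rfl

lemma prefixRev_snd (m n k : ℕ) (ε : ZMod m) (σ : ColouredPerm m n) :
    (prefixRev m n k ε σ).2 = σ.2 * flipPerm n k := rfl

lemma prefixRev_prefixRev (m n k : ℕ) (ε : ZMod m) (σ : ColouredPerm m n) :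
    prefixRev m n k (-ε) (prefixRev m n k ε σ) = σ := by
  refine Prod.ext ?_ ?_
  · funext t
    rw [prefixRev_fst]
    by_cases h : t.val < k
    · rw [if_pos h, prefixRev_fst, if_pos (flipPerm_val_lt n k h), flipPerm_flipPerm]; ring
    · rw [if_neg h, prefixRev_fst, if_neg h]
  · rw [prefixRev_snd, prefixRev_snd, mul_assoc, flipPerm_mul_self, mul_one]

lemma prefixRev_inv_apply (m n k : ℕ) (ε : ZMod m) (σ : ColouredPerm m n) (x : Fin n) :
    (prefixRev m n k ε σ).2⁻¹ x = flipPerm n k (σ.2⁻¹ x) := by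
  rw [prefixRev_snd, _root_.mul_inv_rev, flipPerm_inv, Equiv.Perm.mul_apply]

lemma zmod_one_ne_zero {m : ℕ} (hm : 4 ≤ m) : (1 : ZMod m) ≠ 0 := by
  intro h
  rw [show (1 : ZMod m) = ((1 : ℕ) : ZMod m) by push_cast; rfl,
    ZMod.natCast_eq_zero_iff] at h
  have := Nat.le_of_dvd one_pos h
  omega

lemma zmod_neg_one_ne_zero {m : ℕ} (hm : 4 ≤ m) : (-1 : ZMod m) ≠ 0 := by
  intro h
  exact zmod_one_ne_zero hm (by rw [← neg_neg (1 : ZMod m), h, neg_zero])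

lemma zmod_one_ne_neg_one {m : ℕ} (hm : 4 ≤ m) : (1 : ZMod m) ≠ -1 := by
  intro h
  have h2 : ((2 : ℕ) : ZMod m) = 0 := by push_cast; linear_combination h
  rw [ZMod.natCast_eq_zero_iff] at h2
  have := Nat.le_of_dvd two_pos h2
  omega

lemma prefixRev_ne (m n : ℕ) (h0 : 0 < n) {k : ℕ} {ε : ZMod m}
    (hk1 : 1 ≤ k) (hk2 : k ≤ n) (hε : ε ≠ 0) (σ : ColouredPerm m n) :
    prefixRev m n k ε σ ≠ σ := by
  intro h
  by_cases hk : k = 1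
  · subst hk
    have h1 := congrFun (congrArg Prod.fst h) ⟨0, h0⟩
    rw [prefixRev_fst, if_pos (show (0:ℕ) < 1 by omega), flipPerm_apply_lt n 1 (show (0:ℕ) < 1 by omega) hk2] at h1
    have heq : (⟨1 - 1 - 0, by omega⟩ : Fin n) = ⟨0, h0⟩ := rfl
    rw [heq] at h1
    exact hε (add_eq_left.mp h1)
  · have h2 := congrArg Prod.snd h
    rw [prefixRev_snd] at h2
    have hflip : flipPerm n k = 1 := mul_left_cancel (by rw [h2, mul_one])
    have h3 : flipPerm n k ⟨0, h0⟩ = ⟨0, h0⟩ := by rw [hflip]; rfl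
    rw [flipPerm_apply_lt n k (show (0:ℕ) < k by omega) hk2] at h3
    have := congrArg Fin.val h3
    simp only [Fin.val_mk] at this
    omega

lemma prefixRev_inj (m n : ℕ) (h0 : 0 < n) (σ : ColouredPerm m n) {k k' : ℕ} {ε ε' : ZMod m}
    (hk1 : 1 ≤ k) (hk2 : k ≤ n) (hk1' : 1 ≤ k') (hk2' : k' ≤ n)
    (h : prefixRev m n k ε σ = prefixRev m n k' ε' σ) : k = k' ∧ ε = ε' := by
  have h2 := congrArg Prod.snd h
  rw [prefixRev_snd, prefixRev_snd] at h2
  have hperm : flipPerm n k = flipPerm n k' := mul_left_cancel h2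
  have hzero : flipPerm n k ⟨0, h0⟩ = flipPerm n k' ⟨0, h0⟩ := by rw [hperm]
  rw [flipPerm_apply_lt n k (show (0:ℕ) < k by omega) hk2, flipPerm_apply_lt n k' (show (0:ℕ) < k' by omega) hk2'] at hzero
  have hv := congrArg Fin.val hzero
  simp only [Fin.val_mk] at hv
  have hkk : k = k' := by omega
  subst hkk
  have h1 := congrFun (congrArg Prod.fst h) ⟨0, h0⟩
  rw [prefixRev_fst, prefixRev_fst, if_pos (show (0:ℕ) < k by omega), if_pos (show (0:ℕ) < k by omega)] at h1
  exact ⟨rfl, add_left_cancel h1⟩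

lemma pancakeAdj_iff (m n : ℕ) (hm : 4 ≤ m) (h0 : 0 < n) (σ τ : ColouredPerm m n) :
    pancakeAdj m n σ τ ↔ ∃ k, (1 ≤ k ∧ k ≤ n) ∧ ∃ ε : ZMod m, (ε = 1 ∨ ε = -1) ∧
      τ = prefixRev m n k ε σ := by
  constructor
  · rintro ⟨hne, k, hk1, hk2, ε, hε, (h | h)⟩
    · exact ⟨k, ⟨hk1, hk2⟩, ε, hε, h⟩
    · refine ⟨k, ⟨hk1, hk2⟩, -ε, ?_, ?_⟩
      · rcases hε with rfl | rfl
        · exact Or.inr rfl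
        · exact Or.inl (neg_neg 1)
      · rw [h, prefixRev_prefixRev]
  · rintro ⟨k, ⟨hk1, hk2⟩, ε, hε, rfl⟩
    have hεne : ε ≠ 0 := by
      rcases hε with rfl | rfl
      exacts [zmod_one_ne_zero hm, zmod_neg_one_ne_zero hm]
    exact ⟨(prefixRev_ne m n h0 hk1 hk2 hεne σ).symm, k, hk1, hk2, ε, hε, Or.inl rfl⟩

lemma sum_adj (m n : ℕ) [NeZero m] (hm : 4 ≤ m) (h0 : 0 < n) (f : ColouredPerm m n → ℝ)
    (σ : ColouredPerm m n) :
    ∑ τ : ColouredPerm m n, (pancakeAdjMatrix m n σ τ) * f τ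
      = ∑ p ∈ Finset.Icc 1 n ×ˢ ({1, -1} : Finset (ZMod m)), f (prefixRev m n p.1 p.2 σ) := by
  classical
  have hstep : ∑ τ : ColouredPerm m n, (pancakeAdjMatrix m n σ τ) * f τ
      = ∑ τ ∈ Finset.univ.filter (pancakeAdj m n σ), f τ := by
    rw [Finset.sum_filter]
    refine Finset.sum_congr rfl fun τ _ => ?_
    have hmat : pancakeAdjMatrix m n σ τ = if pancakeAdj m n σ τ then 1 else 0 := rfl
    rw [hmat]
    split_ifs <;> simp
  rw [hstep]
  have himg : Finset.univ.filter (pancakeAdj m n σ)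
      = (Finset.Icc 1 n ×ˢ ({1, -1} : Finset (ZMod m))).image
          (fun p => prefixRev m n p.1 p.2 σ) := by
    ext τ
    simp only [Finset.mem_filter, Finset.mem_univ, true_and, Finset.mem_image,
      Finset.mem_product, Finset.mem_Icc, Finset.mem_insert, Finset.mem_singleton,
      pancakeAdj_iff m n hm h0]
    constructor
    · rintro ⟨k, ⟨hk1, hk2⟩, ε, hε, rfl⟩
      exact ⟨(k, ε), ⟨⟨hk1, hk2⟩, hε⟩, rfl⟩
    · rintro ⟨⟨k, ε⟩, ⟨⟨hk1, hk2⟩, hε⟩, rfl⟩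
      exact ⟨k, ⟨hk1, hk2⟩, ε, hε, rfl⟩
  rw [himg, Finset.sum_image]
  rintro ⟨k, ε⟩ hp ⟨k', ε'⟩ hq h
  simp only [Finset.coe_product, Set.mem_prod, Finset.mem_coe, Finset.mem_product, Finset.mem_Icc] at hp hq
  obtain ⟨hk, hε⟩ := prefixRev_inj m n h0 σ hp.1.1 hp.1.2 hq.1.1 hq.1.2 h
  exact Prod.ext hk hε

end PancakeProofAux
section PancakeEig

open Finset Matrix

lemma pat_key {m : ℕ} [NeZero m] (hm : 4 ≤ m) (hm4 : m % 4 = 0) (d : ZMod m) :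
    pat ((d + 1).val) + pat ((d - 1).val) = 0 := by
  haveI : Fact (1 < m) := ⟨by omega⟩
  have h1 : (d + 1).val % 4 = (d.val + 1) % 4 := by
    rw [ZMod.val_add, ZMod.val_one, Nat.mod_mod_of_dvd _ (by omega : 4 ∣ m)]
  have hneg : (-1 : ZMod m).val = m - 1 := by
    have hc : ((m - 1 : ℕ) : ZMod m) = -1 := by
      rw [Nat.cast_sub (by omega : 1 ≤ m), ZMod.natCast_self, Nat.cast_one, zero_sub]
    rw [← hc, ZMod.val_natCast, Nat.mod_eq_of_lt (by omega)]
  have h2 : (d - 1).val % 4 = (d.val + 3) % 4 := by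
    rw [sub_eq_add_neg, ZMod.val_add, hneg, Nat.mod_mod_of_dvd _ (by omega : 4 ∣ m)]
    omega
  rw [pat_congr h1, pat_congr h2]
  have h4 : d.val % 4 = 0 ∨ d.val % 4 = 1 ∨ d.val % 4 = 2 ∨ d.val % 4 = 3 := by omega
  rcases h4 with h | h | h | h <;>
    · simp only [pat, show (d.val + 1) % 4 = (d.val % 4 + 1) % 4 by omega,
        show (d.val + 3) % 4 = (d.val % 4 + 3) % 4 by omega, h]
      norm_num

/-- The position `⌊n/2⌋` (0-indexed). -/
def posHalf (n : ℕ) (h0 : 0 < n) : Fin n := ⟨n / 2, Nat.div_lt_self h0 one_lt_two⟩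

/-- The eigenvector: supported on coloured permutations whose letter `0` sits at
position `⌊n/2⌋`, with value a 4-periodic function of the colour there. -/
noncomputable def evec (m n : ℕ) (h0 : 0 < n) (a : ZMod m) (σ : ColouredPerm m n) : ℝ :=
  if σ.2⁻¹ ⟨0, h0⟩ = posHalf n h0 then pat ((σ.1 (σ.2⁻¹ ⟨0, h0⟩) - a).val) else 0

lemma evec_prefixRev (m n : ℕ) (h0 : 0 < n) (a ε : ZMod m) (k : ℕ) (σ : ColouredPerm m n) :
    evec m n h0 a (prefixRev m n k ε σ) =
      if (σ.2⁻¹ ⟨0, h0⟩).val < k then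
        (if flipPerm n k (σ.2⁻¹ ⟨0, h0⟩) = posHalf n h0 then
          pat ((σ.1 (σ.2⁻¹ ⟨0, h0⟩) + ε - a).val) else 0)
      else evec m n h0 a σ := by
  have hpos : (prefixRev m n k ε σ).2⁻¹ ⟨0, h0⟩ = flipPerm n k (σ.2⁻¹ ⟨0, h0⟩) :=
    prefixRev_inv_apply m n k ε σ _
  by_cases hjk : (σ.2⁻¹ ⟨0, h0⟩).val < k
  · have hcol : (prefixRev m n k ε σ).1 (flipPerm n k (σ.2⁻¹ ⟨0, h0⟩))
        = σ.1 (σ.2⁻¹ ⟨0, h0⟩) + ε := by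
      rw [prefixRev_fst, if_pos (flipPerm_val_lt n k hjk), flipPerm_flipPerm]
    rw [if_pos hjk]
    unfold evec
    rw [hpos, hcol]
  · have hflip : flipPerm n k (σ.2⁻¹ ⟨0, h0⟩) = σ.2⁻¹ ⟨0, h0⟩ := flipPerm_apply_ge n k hjk
    have hcol : (prefixRev m n k ε σ).1 (σ.2⁻¹ ⟨0, h0⟩) = σ.1 (σ.2⁻¹ ⟨0, h0⟩) := by
      rw [prefixRev_fst, if_neg hjk]
    rw [if_neg hjk]
    unfold evec
    rw [hpos, hflip, hcol]

lemma mulVec_evec (m n : ℕ) [NeZero m] (hm : 4 ≤ m) (hm4 : m % 4 = 0)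
    (h0 : 0 < n) (a : ZMod m) :
    pancakeAdjMatrix m n *ᵥ evec m n h0 a = ((2 * (n / 2) : ℕ) : ℝ) • evec m n h0 a := by
  classical
  funext σ
  have hmv : (pancakeAdjMatrix m n *ᵥ evec m n h0 a) σ
      = ∑ τ : ColouredPerm m n, pancakeAdjMatrix m n σ τ * evec m n h0 a τ := rfl
  rw [Pi.smul_apply, smul_eq_mul, hmv, sum_adj m n hm h0, Finset.sum_product]
  have key : ∀ k ∈ Finset.Icc 1 n,
      (∑ ε ∈ ({1, -1} : Finset (ZMod m)), evec m n h0 a (prefixRev m n k ε σ))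
        = if k ≤ (σ.2⁻¹ ⟨0, h0⟩).val then 2 * evec m n h0 a σ else 0 := by
    intro k hk
    rw [Finset.mem_Icc] at hk
    rw [Finset.sum_pair (zmod_one_ne_neg_one hm), evec_prefixRev, evec_prefixRev]
    by_cases hjk : (σ.2⁻¹ ⟨0, h0⟩).val < k
    · rw [if_pos hjk, if_pos hjk, if_neg (show ¬ k ≤ (σ.2⁻¹ ⟨0, h0⟩).val by omega)]
      by_cases hfl : flipPerm n k (σ.2⁻¹ ⟨0, h0⟩) = posHalf n h0
      · rw [if_pos hfl, if_pos hfl]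
        have e1 : σ.1 (σ.2⁻¹ ⟨0, h0⟩) + 1 - a = (σ.1 (σ.2⁻¹ ⟨0, h0⟩) - a) + 1 := by ring
        have e2 : σ.1 (σ.2⁻¹ ⟨0, h0⟩) + -1 - a = (σ.1 (σ.2⁻¹ ⟨0, h0⟩) - a) - 1 := by ring
        rw [e1, e2]
        exact pat_key hm hm4 _
      · rw [if_neg hfl, if_neg hfl]; norm_num
    · rw [if_neg hjk, if_neg hjk, if_pos (show k ≤ (σ.2⁻¹ ⟨0, h0⟩).val by omega)]; ring
  rw [Finset.sum_congr rfl key, ← Finset.sum_filter]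
  have hfilter : (Finset.Icc 1 n).filter (fun k => k ≤ (σ.2⁻¹ ⟨0, h0⟩).val)
      = Finset.Icc 1 (σ.2⁻¹ ⟨0, h0⟩).val := by
    ext x
    have := (σ.2⁻¹ ⟨0, h0⟩).isLt
    simp only [Finset.mem_Icc, Finset.mem_filter]
    omega
  rw [hfilter, Finset.sum_const, Nat.card_Icc, nsmul_eq_mul]
  by_cases hjj : σ.2⁻¹ ⟨0, h0⟩ = posHalf n h0
  · have hv : (σ.2⁻¹ ⟨0, h0⟩).val = n / 2 := by rw [hjj]; rfl
    rw [hv, show n / 2 + 1 - 1 = n / 2 by omega]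
    push_cast
    ring
  · have he : evec m n h0 a σ = 0 := by unfold evec; rw [if_neg hjj]
    rw [he]
    ring

end PancakeEig
section PancakeSpectral

open Finset Matrix

lemma pancake_isHermitian (m n : ℕ) [NeZero m] : (pancakeAdjMatrix m n).IsHermitian := by
  classical
  have hsymm : ∀ σ τ, pancakeAdj m n σ τ ↔ pancakeAdj m n τ σ :=
    fun σ τ => ⟨fun h => (pancakeGraph m n).adj_symm h, fun h => (pancakeGraph m n).adj_symm h⟩
  show (pancakeAdjMatrix m n)ᴴ = pancakeAdjMatrix m n
  ext σ τ
  rw [Matrix.conjTranspose_apply]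
  have h1 : pancakeAdjMatrix m n τ σ = if pancakeAdj m n τ σ then 1 else 0 := rfl
  have h2 : pancakeAdjMatrix m n σ τ = if pancakeAdj m n σ τ then 1 else 0 := rfl
  rw [h1, h2, star_trivial]
  exact if_congr (hsymm τ σ) rfl rfl

lemma charpoly_hermitian {V : Type*} [Fintype V] [DecidableEq V] {A : Matrix V V ℝ}
    (hA : A.IsHermitian) :
    A.charpoly = ∏ i, (X - C ((RCLike.ofReal ∘ hA.eigenvalues) i)) := by
  set U : Matrix V V ℝ := (hA.eigenvectorUnitary : Matrix V V ℝ) with hU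
  set d : V → ℝ := RCLike.ofReal ∘ hA.eigenvalues with hd
  set mC : Matrix V V ℝ →+* Matrix V V ℝ[X] := (Polynomial.C : ℝ →+* ℝ[X]).mapMatrix with hmC
  have hU1 : U * star U = 1 := (Matrix.mem_unitaryGroup_iff).mp hA.eigenvectorUnitary.2
  have hspec : A = U * Matrix.diagonal d * star U := hA.spectral_theorem
  have h1 : mC U * (Matrix.scalar V (X : ℝ[X])) * mC (star U) = Matrix.scalar V (X : ℝ[X]) := by
    have hcomm := Matrix.scalar_commute (X : ℝ[X]) (fun r' => Commute.all _ r') (mC U)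
    rw [← hcomm.eq, mul_assoc, ← _root_.map_mul mC _ _, hU1, _root_.map_one mC, mul_one]
  have h2 : mC U * mC (Matrix.diagonal d) * mC (star U) = mC A := by
    rw [hspec, _root_.map_mul mC, _root_.map_mul mC]
  have hmain : Matrix.charmatrix A
      = mC U * Matrix.charmatrix (Matrix.diagonal d) * mC (star U) := by
    have hcm : Matrix.charmatrix A = Matrix.scalar V (X : ℝ[X]) - mC A := rfl
    have hcm2 : Matrix.charmatrix (Matrix.diagonal d)
        = Matrix.scalar V (X : ℝ[X]) - mC (Matrix.diagonal d) := rfl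
    rw [hcm, hcm2, mul_sub, sub_mul, h1, h2]
  have hdet1 : (mC U).det * (mC (star U)).det = 1 := by
    rw [← Matrix.det_mul, ← _root_.map_mul mC _ _, hU1, _root_.map_one mC, Matrix.det_one]
  have hdiag : Matrix.charmatrix (Matrix.diagonal d)
      = Matrix.diagonal (fun i => (X : ℝ[X]) - C (d i)) := by
    ext i j
    by_cases hij : i = j
    · subst hij
      rw [Matrix.charmatrix_apply_eq, Matrix.diagonal_apply_eq, Matrix.diagonal_apply_eq]
    · rw [Matrix.charmatrix_apply_ne _ _ _ hij, Matrix.diagonal_apply_ne _ hij,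
        Matrix.diagonal_apply_ne _ hij, _root_.map_zero C, neg_zero]
  calc A.charpoly = (Matrix.charmatrix A).det := rfl
    _ = (mC U).det * (Matrix.charmatrix (Matrix.diagonal d)).det * (mC (star U)).det := by
        rw [hmain, Matrix.det_mul, Matrix.det_mul]
    _ = (Matrix.charmatrix (Matrix.diagonal d)).det
          * ((mC U).det * (mC (star U)).det) := by ring
    _ = (Matrix.charmatrix (Matrix.diagonal d)).det := by rw [hdet1, mul_one]
    _ = ∏ i, (X - C (d i)) := by rw [hdiag, Matrix.det_diagonal]

end PancakeSpectral
/-- For `m ≡ 0 (mod 4)` (with `m ≥ 1`) and `n ≥ 2`, taking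
`k = ⌊n/2⌋`, the multiplicity of `2k` as an eigenvalue of the adjacency matrix
of `𝒫_m(n)` (i.e. as a root of its characteristic polynomial) is at least `2`. -/
theorem pancake_eigenvalue_multiplicity_two (m n : ℕ) (hm1 : 1 ≤ m)
    (hm4 : m % 4 = 0) (hn : 2 ≤ n) :
    haveI : NeZero m := ⟨by omega⟩
    2 ≤ (pancakeAdjMatrix m n).charpoly.rootMultiplicity ((2 * (n / 2) : ℕ) : ℝ) := by
  haveI : NeZero m := ⟨by omega⟩
  classical
  haveI : Fact (1 < m) := ⟨by omega⟩
  have hm : 4 ≤ m := by omega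
  have h0 : 0 < n := by omega
  set lam : ℝ := ((2 * (n / 2) : ℕ) : ℝ) with hlam
  set A := pancakeAdjMatrix m n with hA_def
  have hA : A.IsHermitian := pancake_isHermitian m n
  set d : ColouredPerm m n → ℝ := RCLike.ofReal ∘ hA.eigenvalues with hd
  have hcp : A.charpoly = ∏ i, (X - C (d i)) := charpoly_hermitian hA
  have hroots : A.charpoly.roots = Finset.univ.val.map d := by
    rw [hcp]
    have hprod : ∏ i, ((X : ℝ[X]) - C (d i))
        = ((Finset.univ.val.map d).map (fun a => (X : ℝ[X]) - C a)).prod := by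
      rw [Multiset.map_map]
      rfl
    rw [hprod, Polynomial.roots_multiset_prod_X_sub_C]
  rw [← Polynomial.count_roots, hroots, Multiset.count_map]
  by_contra hlt
  push_neg at hlt
  set T := Multiset.filter (fun i => lam = d i) Finset.univ.val with hT
  -- eigenvectors
  have hf0 := mulVec_evec m n hm hm4 h0 0
  have hf1 := mulVec_evec m n hm hm4 h0 1
  set U : Matrix (ColouredPerm m n) (ColouredPerm m n) ℝ :=
    (hA.eigenvectorUnitary : Matrix (ColouredPerm m n) (ColouredPerm m n) ℝ) with hU
  have hU1 : U * star U = 1 := (Matrix.mem_unitaryGroup_iff).mp hA.eigenvectorUnitary.2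
  have hDU : Matrix.diagonal d * star U = star U * A := by
    have h : star U * A * U = Matrix.diagonal d := by
      have h' := hA.conjStarAlgAut_star_eigenvectorUnitary
      rw [Unitary.conjStarAlgAut_apply, Unitary.coe_star, star_star] at h'
      exact h'
    calc Matrix.diagonal d * star U = (star U * A * U) * star U := by rw [h]
      _ = star U * A * (U * star U) := by rw [mul_assoc]
      _ = star U * A := by rw [hU1, mul_one]
  have hvanish : ∀ f : ColouredPerm m n → ℝ, Matrix.mulVec A f = lam • f →
      ∀ i, i ∉ T → Matrix.mulVec (star U) f i = 0 := by
    intro f hf i hiT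
    have hi : ¬ (lam = d i) := by
      intro h
      exact hiT (Multiset.mem_filter.mpr ⟨Finset.mem_univ i, h⟩)
    have h1 : Matrix.mulVec (Matrix.diagonal d) (Matrix.mulVec (star U) f) = lam • Matrix.mulVec (star U) f := by
      rw [Matrix.mulVec_mulVec, hDU, ← Matrix.mulVec_mulVec, hf, Matrix.mulVec_smul]
    have h2 := congrFun h1 i
    rw [Matrix.mulVec_diagonal, Pi.smul_apply, smul_eq_mul] at h2
    have h3 : (d i - lam) * Matrix.mulVec (star U) f i = 0 := by linear_combination h2
    rcases mul_eq_zero.mp h3 with h4 | h4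
    · exact absurd (by linarith : lam = d i) hi
    · exact h4
  have hrecover : ∀ f : ColouredPerm m n → ℝ, Matrix.mulVec U (Matrix.mulVec (star U) f) = f := by
    intro f
    rw [Matrix.mulVec_mulVec, hU1, Matrix.one_mulVec]
  -- special vertices and values
  have hswap : (Equiv.swap (⟨0, h0⟩ : Fin n) (posHalf n h0))⁻¹ ⟨0, h0⟩ = posHalf n h0 := by
    rw [Equiv.swap_inv, Equiv.swap_apply_left]
  have hval : ∀ c a : ZMod m,
      evec m n h0 a ((fun _ => c, Equiv.swap ⟨0, h0⟩ (posHalf n h0)) : ColouredPerm m n)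
        = pat ((c - a).val) := by
    intro c a
    unfold evec
    rw [show ((fun _ => c, Equiv.swap (⟨0, h0⟩ : Fin n) (posHalf n h0)) :
        ColouredPerm m n).2⁻¹ ⟨0, h0⟩ = posHalf n h0 from hswap, if_pos rfl]
  set σ₀ : ColouredPerm m n := (fun _ => (0 : ZMod m), Equiv.swap ⟨0, h0⟩ (posHalf n h0)) with hσ₀
  set σ₁ : ColouredPerm m n := (fun _ => (1 : ZMod m), Equiv.swap ⟨0, h0⟩ (posHalf n h0)) with hσ₁
  have h00 : evec m n h0 (0 : ZMod m) σ₀ = 1 := by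
    rw [hσ₀, hval]
    simp [pat, ZMod.val_zero]
  have h10 : evec m n h0 (1 : ZMod m) σ₀ = 0 := by
    rw [hσ₀, hval]
    have hneg : ((0 : ZMod m) - 1).val = m - 1 := by
      rw [zero_sub]
      have hc : ((m - 1 : ℕ) : ZMod m) = -1 := by
        rw [Nat.cast_sub (by omega : 1 ≤ m), ZMod.natCast_self, Nat.cast_one, zero_sub]
      rw [← hc, ZMod.val_natCast, Nat.mod_eq_of_lt (by omega)]
    rw [hneg]
    have : (m - 1) % 4 = 3 := by omega
    simp [pat, this]
  have h01 : evec m n h0 (0 : ZMod m) σ₁ = 0 := by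
    rw [hσ₁, hval]
    have : ((1 : ZMod m) - 0).val = 1 := by rw [sub_zero, ZMod.val_one]
    rw [this]
    simp [pat]
  have h11 : evec m n h0 (1 : ZMod m) σ₁ = 1 := by
    rw [hσ₁, hval]
    simp [pat, ZMod.val_zero]
  -- the two projected vectors
  set w0 : ColouredPerm m n → ℝ := Matrix.mulVec (star U) (evec m n h0 0) with hw0def
  set w1 : ColouredPerm m n → ℝ := Matrix.mulVec (star U) (evec m n h0 1) with hw1def
  have hTcard : T.card = 0 ∨ T.card = 1 := by omega
  rcases hTcard with hcard | hcard
  · have hT0 : T = 0 := Multiset.card_eq_zero.mp hcard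
    have hw0zero : w0 = 0 := by
      funext i
      exact hvanish _ hf0 i (by rw [hT0]; exact Multiset.notMem_zero i)
    have hev0 : evec m n h0 (0 : ZMod m) = 0 := by
      rw [← hrecover (evec m n h0 0), ← hw0def, hw0zero, Matrix.mulVec_zero]
    have := congrFun hev0 σ₀
    rw [h00] at this
    exact one_ne_zero this
  · obtain ⟨i₀, hi₀⟩ := Multiset.card_eq_one.mp hcard
    have hmem : ∀ i, i ≠ i₀ → i ∉ T := by
      intro i hi hiT
      rw [hi₀] at hiT
      exact hi (Multiset.mem_singleton.mp hiT)
    have hw0 : ∀ i, i ≠ i₀ → w0 i = 0 := fun i hi => hvanish _ hf0 i (hmem i hi)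
    have hw1 : ∀ i, i ≠ i₀ → w1 i = 0 := fun i hi => hvanish _ hf1 i (hmem i hi)
    have hcombw : w1 i₀ • w0 - w0 i₀ • w1 = 0 := by
      funext i
      by_cases hi : i = i₀
      · subst hi
        simp only [Pi.sub_apply, Pi.smul_apply, smul_eq_mul, Pi.zero_apply]
        ring
      · simp [Pi.sub_apply, Pi.smul_apply, smul_eq_mul, hw0 i hi, hw1 i hi]
    have hcombf : w1 i₀ • evec m n h0 (0 : ZMod m) - w0 i₀ • evec m n h0 1 = 0 := by
      have hlin : Matrix.mulVec U (w1 i₀ • w0 - w0 i₀ • w1)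
          = w1 i₀ • Matrix.mulVec U w0 - w0 i₀ • Matrix.mulVec U w1 := by
        rw [Matrix.mulVec_sub, Matrix.mulVec_smul, Matrix.mulVec_smul]
      rw [hcombw, Matrix.mulVec_zero] at hlin
      rw [hw0def, hw1def, hrecover, hrecover] at hlin
      exact hlin.symm
    have e0 := congrFun hcombf σ₀
    have e1 := congrFun hcombf σ₁
    simp only [Pi.sub_apply, Pi.smul_apply, smul_eq_mul, Pi.zero_apply, h00, h10, h01, h11,
      mul_one, mul_zero] at e0 e1
    have hw1i₀ : w1 i₀ = 0 := by linarith
    have hw0i₀ : w0 i₀ = 0 := by linarith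
    have hw0zero : w0 = 0 := by
      funext i
      by_cases hi : i = i₀
      · rw [hi]; exact hw0i₀
      · exact hw0 i hi
    have hev0 : evec m n h0 (0 : ZMod m) = 0 := by
      rw [← hrecover (evec m n h0 0), ← hw0def, hw0zero, Matrix.mulVec_zero]
    have := congrFun hev0 σ₀
    rw [h00] at this
    exact one_ne_zero this
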